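/- arXiv:2001.04714 — 2 statements merged into one kernel-verified Lean document; each statement's English description precedes it below -/
import Mathlib

section
/- Every Archimedean f-algebra is commutative. -/
section Stmt4Aux

variable {E : Type*} [Ring E] [Lattice E] [CovariantClass E E (· + ·) (· ≤ ·)]

/-- In an f-algebra, disjoint elements have zero products (both orders). -/
private lemma stmt4_disj_mul
    (hf : ∀ x y z : E, x ⊓ y = 0 → 0 ≤ z → (x * z) ⊓ y = 0 ∧ (z * x) ⊓ y = 0)
    {u w : E} (huw : u ⊓ w = 0) : u * w = 0 ∧ w * u = 0 := by
  have hu : (0 : E) ≤ u := by rw [← huw]; exact inf_le_left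
  have hw : (0 : E) ≤ w := by rw [← huw]; exact inf_le_right
  have h1 := hf u w w huw hw
  have h2 := hf w (u * w) u (by rw [inf_comm]; exact h1.1) hu
  have h3 := hf w (w * u) u (by rw [inf_comm]; exact h1.2) hu
  refine ⟨?_, ?_⟩
  · have := h2.2; rwa [inf_idem] at this
  · have := h3.1; rwa [inf_idem] at this

private lemma stmt4_nsmul_inf {a b : E} (ha : 0 ≤ a) (hb : 0 ≤ b) (hab : a ⊓ b = 0) :
    ∀ n : ℕ, (n • a) ⊓ b = 0
  | 0 => by rw [zero_nsmul]; exact inf_eq_left.mpr hb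
  | (n + 1) => by
      have ih := stmt4_nsmul_inf ha hb hab n
      have h1 : ((n + 1) • a) ⊓ b ≤ n • a := by
        calc ((n + 1) • a) ⊓ b ≤ (n • a + a) ⊓ (n • a + b) :=
              inf_le_inf (le_of_eq (succ_nsmul a n))
                (le_add_of_nonneg_left (nsmul_nonneg ha n))
          _ = n • a + (a ⊓ b) := (add_inf _ _ _).symm
          _ = n • a := by rw [hab, add_zero]
      have h2 : ((n + 1) • a) ⊓ b ≤ 0 := by
        rw [← ih]; exact le_inf h1 inf_le_right
      exact le_antisymm h2 (le_inf (nsmul_nonneg ha _) hb)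

private lemma stmt4_nsmul_posPart (a : E) (n : ℕ) : n • a⁺ = (n • a)⁺ := by
  have h1 : (n • a⁺) ⊓ a⁻ = 0 :=
    stmt4_nsmul_inf (posPart_nonneg a) (negPart_nonneg a) (posPart_inf_negPart_eq_zero a) n
  have h2 : (n • a⁻) ⊓ (n • a⁺) = 0 :=
    stmt4_nsmul_inf (negPart_nonneg a) (nsmul_nonneg (posPart_nonneg a) n)
      (by rw [inf_comm]; exact h1) n
  have hna : n • a = n • a⁺ - n • a⁻ := by rw [← nsmul_sub, posPart_sub_negPart]
  have hsup : (n • a⁺) ⊔ (n • a⁻) = n • a⁺ + n • a⁻ := by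
    have h3 := inf_add_sup (n • a⁺) (n • a⁻)
    rw [show (n • a⁺) ⊓ (n • a⁻) = 0 from by rw [inf_comm]; exact h2, zero_add] at h3
    exact h3
  rw [posPart_def, hna]
  have hstep : ((n • a⁺) ⊔ (n • a⁻)) - n • a⁻ = (n • a⁺ - n • a⁻) ⊔ (n • a⁻ - n • a⁻) := by
    rw [sub_eq_add_neg ((n • a⁺) ⊔ (n • a⁻)), sup_add, ← sub_eq_add_neg, ← sub_eq_add_neg]
  calc n • a⁺ = ((n • a⁺) ⊔ (n • a⁻)) - n • a⁻ := by rw [hsup]; abel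
    _ = (n • a⁺ - n • a⁻) ⊔ (n • a⁻ - n • a⁻) := hstep
    _ = (n • a⁺ - n • a⁻) ⊔ 0 := by rw [sub_self]

private lemma stmt4_sub_sub_nonneg {A B C : E} (h : B + B ≤ A + C) : 0 ≤ (A - B) - (B - C) := by
  have e : (A - B) - (B - C) = (A + C) - (B + B) := by abel
  rw [e]; exact sub_nonneg.mpr h

private lemma stmt4_sub_sub_le {A B C D : E} (h : A + C ≤ D + (B + B)) :
    (A - B) - (B - C) ≤ D := by
  have e : (A - B) - (B - C) = (A + C) - (B + B) := by abel
  rw [e, sub_le_iff_le_add]; exact h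

private lemma stmt4_double_le {x c : E} (hc0 : 0 ≤ c) :
    (x ⊔ 0) + (x ⊔ 0) ≤ ((x + c) ⊔ 0) + ((x - c) ⊔ 0) := by
  have hR0 : (0 : E) ≤ ((x + c) ⊔ 0) + ((x - c) ⊔ 0) := add_nonneg le_sup_right le_sup_right
  have hRx : x ≤ ((x + c) ⊔ 0) + ((x - c) ⊔ 0) := by
    calc x ≤ x + c := le_add_of_nonneg_right hc0
      _ ≤ (x + c) ⊔ 0 := le_sup_left
      _ ≤ _ := le_add_of_nonneg_right le_sup_right
  have hRxx : x + x ≤ ((x + c) ⊔ 0) + ((x - c) ⊔ 0) := by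
    have e : x + x = (x + c) + (x - c) := by abel
    rw [e]; exact add_le_add le_sup_left le_sup_left
  have eL : (x ⊔ 0) + (x ⊔ 0) = ((x + x) ⊔ x) ⊔ (x ⊔ 0) := by
    rw [sup_add, add_sup, add_sup, add_zero, zero_add, zero_add]
  rw [eL]
  exact sup_le (sup_le hRxx hRx) (sup_le hRx hR0)

private def stmt4OrdGrp : IsOrderedAddMonoid E where
  add_le_add_left := fun _ _ hab c => add_le_add hab (le_refl c)

/-- Core lemma: if `0 ≤ h ≤ c` in an Archimedean f-algebra then `c` and `h` commute. -/
private lemma stmt4_core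
    (hmulpos : ∀ x y : E, 0 ≤ x → 0 ≤ y → 0 ≤ x * y)
    (hf : ∀ x y z : E, x ⊓ y = 0 → 0 ≤ z → (x * z) ⊓ y = 0 ∧ (z * x) ⊓ y = 0)
    (harch : ∀ x y : E, 0 ≤ x → (∀ n : ℕ, n • x ≤ y) → x = 0)
    {h c : E} (h0 : 0 ≤ h) (hhc : h ≤ c) : c * h = h * c := by
  letI : IsOrderedAddMonoid E := stmt4OrdGrp
  have hc0 : 0 ≤ c := h0.trans hhc
  have hcc : 0 ≤ c * c := hmulpos c c hc0 hc0
  have key : ∀ q : ℕ, q • (c * h - h * c) ≤ c * c ∧ q • (h * c - c * h) ≤ c * c := by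
    intro q
    have hqh0 : 0 ≤ q • h := nsmul_nonneg h0 q
    set Ek : ℕ → E := fun k => (q • h - k • c) ⊔ 0 with hEkdef
    set Gk : ℕ → E := fun k => Nat.casesOn k (q • h + c) (fun m => Ek m) with hGkdef
    set ak : ℕ → E := fun k => Gk k - Gk (k + 1) with hakdef
    set vk : ℕ → E := fun k => ak k - ak (k + 1) with hvkdef
    have hE0 : Ek 0 = q • h := by
      show (q • h - 0 • c) ⊔ 0 = q • h
      rw [zero_nsmul, sub_zero]; exact sup_eq_left.mpr hqh0
    have hEnn : ∀ k, 0 ≤ Ek k := fun k => le_sup_right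
    have hEanti : ∀ j k : ℕ, j ≤ k → Ek k ≤ Ek j := by
      intro j k hjk
      exact sup_le_sup_right (sub_le_sub_left (nsmul_le_nsmul_left hc0 hjk) _) 0
    have hEzero : ∀ k : ℕ, q ≤ k → Ek k = 0 := by
      intro k hk
      apply sup_eq_right.mpr
      have h1 : q • h ≤ k • c :=
        le_trans (nsmul_le_nsmul_right hhc q) (nsmul_le_nsmul_left hc0 hk)
      exact sub_nonpos.mpr h1
    have ha0 : ak 0 = c := by
      show Gk 0 - Gk 1 = c
      show (q • h + c) - Ek 0 = c
      rw [hE0]; abel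
    have haq : ak (q + 1) = 0 := by
      show Ek q - Ek (q + 1) = 0
      rw [hEzero q le_rfl, hEzero (q + 1) (Nat.le_succ q), sub_zero]
    have hvsucc : ∀ m : ℕ, vk (m + 1) = (Ek m - Ek (m + 1)) - (Ek (m + 1) - Ek (m + 2)) :=
      fun m => rfl
    have hEmx : ∀ m : ℕ, Ek m = ((q • h - (m + 1) • c) + c) ⊔ 0 := by
      intro m
      show (q • h - m • c) ⊔ 0 = _
      congr 1
      rw [succ_nsmul]; abel
    have hEm2x : ∀ m : ℕ, Ek (m + 2) = ((q • h - (m + 1) • c) - c) ⊔ 0 := by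
      intro m
      show (q • h - (m + 2) • c) ⊔ 0 = _
      congr 1
      rw [show (m + 2) • c = (m + 1) • c + c from succ_nsmul c (m + 1)]; abel
    have hvnn : ∀ k, 0 ≤ vk k := by
      intro k
      match k with
      | 0 =>
        show 0 ≤ ak 0 - ak 1
        rw [ha0]
        show 0 ≤ c - (Ek 0 - Ek 1)
        rw [hE0]
        have hE1 : q • h - c ≤ Ek 1 := by
          have h1 : q • h - 1 • c ≤ Ek 1 := le_sup_left
          rwa [one_nsmul] at h1
        have e : c - (q • h - Ek 1) = Ek 1 - (q • h - c) := by abel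
        rw [e]
        exact sub_nonneg.mpr hE1
      | (m + 1) =>
        rw [hvsucc m]
        apply stmt4_sub_sub_nonneg
        rw [hEmx m, hEm2x m]
        exact stmt4_double_le hc0
    have hvleE : ∀ m : ℕ, vk (m + 1) ≤ Ek m := by
      intro m
      rw [hvsucc m]
      apply stmt4_sub_sub_le
      apply add_le_add le_rfl
      exact le_trans (hEanti (m + 1) (m + 2) (by omega))
        (le_add_of_nonneg_left (hEnn (m + 1)))
    have hv0 : vk 0 = (c - q • h) ⊔ 0 := by
      show ak 0 - ak 1 = _
      rw [ha0]
      show c - (Ek 0 - Ek 1) = _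
      rw [hE0]
      show c - (q • h - ((q • h - 1 • c) ⊔ 0)) = _
      rw [one_nsmul]
      have e : c - (q • h - ((q • h - c) ⊔ 0)) = ((q • h - c) ⊔ 0) + (c - q • h) := by abel
      rw [e, sup_add, zero_add, show q • h - c + (c - q • h) = (0 : E) from by abel, sup_comm]
    have hvleF : ∀ j : ℕ, vk j ≤ ((j + 1) • c - q • h) ⊔ 0 := by
      intro j
      match j with
      | 0 =>
        rw [hv0]
        rw [show ((0 + 1) • c : E) = c from one_nsmul c]
      | (m + 1) =>
        rw [hvsucc m]
        apply stmt4_sub_sub_le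
        set x := q • h - (m + 1) • c with hxdef
        set F := ((m + 1 + 1) • c - q • h) ⊔ 0 with hFdef
        have hEm1 : Ek (m + 1) = x ⊔ 0 := rfl
        have hcx : c - x = (m + 1 + 1) • c - q • h := by
          rw [show (m + 1 + 1) • c = (m + 1) • c + c from succ_nsmul c (m + 1), hxdef]; abel
        have h1 : Ek m ≤ (x ⊔ 0) + c := by
          rw [hEmx m, ← hxdef]
          exact sup_le (add_le_add_left le_sup_left c) (add_nonneg le_sup_right hc0)
        have h2 : Ek (m + 2) ≤ ((x ⊔ 0) - c) ⊔ 0 := by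
          rw [hEm2x m, ← hxdef]
          exact sup_le_sup_right (sub_le_sub_right le_sup_left c) 0
        have h3 : ((x ⊔ 0) - c) ⊔ 0 ≤ F + ((x ⊔ 0) - c) := by
          have e1 : (((x ⊔ 0) - c) ⊔ 0) + (c - (x ⊔ 0)) = (c - (x ⊔ 0)) ⊔ 0 := by
            rw [sup_add, zero_add,
              show (x ⊔ 0) - c + (c - (x ⊔ 0)) = (0 : E) from by abel, sup_comm]
          have e2 : (c - (x ⊔ 0)) ⊔ 0 ≤ F := by
            apply sup_le _ le_sup_right
            calc c - (x ⊔ 0) ≤ c - x := sub_le_sub_left le_sup_left c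
              _ ≤ (c - x) ⊔ 0 := le_sup_left
              _ = F := by rw [hcx]
          calc ((x ⊔ 0) - c) ⊔ 0 = ((c - (x ⊔ 0)) ⊔ 0) - (c - (x ⊔ 0)) := by rw [← e1]; abel
            _ ≤ F - (c - (x ⊔ 0)) := sub_le_sub_right e2 _
            _ = F + ((x ⊔ 0) - c) := by abel
        calc Ek m + Ek (m + 2) ≤ ((x ⊔ 0) + c) + (F + ((x ⊔ 0) - c)) :=
              add_le_add h1 (h2.trans h3)
          _ = F + ((x ⊔ 0) + (x ⊔ 0)) := by abel
          _ = F + (Ek (m + 1) + Ek (m + 1)) := by rw [hEm1]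
    have hdisj : ∀ j k : ℕ, j + 2 ≤ k → vk j ⊓ vk k = 0 := by
      intro j k hjk
      obtain ⟨m, rfl⟩ : ∃ m, k = m + 1 := ⟨k - 1, by omega⟩
      have hEF : Ek (j + 1) ⊓ (((j + 1) • c - q • h) ⊔ 0) = 0 := by
        have h4 := posPart_inf_negPart_eq_zero (q • h - (j + 1) • c)
        rw [posPart_def, negPart_def, neg_sub] at h4
        exact h4
      apply le_antisymm _ (le_inf (hvnn j) (hvnn (m + 1)))
      calc vk j ⊓ vk (m + 1) ≤ (((j + 1) • c - q • h) ⊔ 0) ⊓ Ek (j + 1) :=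
            inf_le_inf (hvleF j) ((hvleE m).trans (hEanti (j + 1) m (by omega)))
        _ = 0 := by rw [inf_comm]; exact hEF
    have hprod : ∀ j k : ℕ, (j + 2 ≤ k ∨ k + 2 ≤ j) → vk j * vk k = 0 := by
      intro j k hjk
      rcases hjk with h' | h'
      · exact (stmt4_disj_mul hf (hdisj j k h')).1
      · exact (stmt4_disj_mul hf (hdisj k j h')).2
    have hsumv : ∑ k ∈ Finset.range (q + 1), vk k = c := by
      have h5 := Finset.sum_range_sub' ak (q + 1)
      rw [ha0, haq, sub_zero] at h5
      exact h5
    have hsumv1 : ∑ k ∈ Finset.range (q + 1), ak (k + 1) = q • h := by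
      have h5 : ∑ k ∈ Finset.range (q + 1), (Gk (k + 1) - Gk (k + 1 + 1))
          = Gk (0 + 1) - Gk (q + 1 + 1) := Finset.sum_range_sub' (fun k => Gk (k + 1)) (q + 1)
      have e1 : Gk (0 + 1) = q • h := hE0
      have e2 : Gk (q + 1 + 1) = 0 := hEzero (q + 1) (by omega)
      rw [e1, e2, sub_zero] at h5
      exact h5
    have hsumkv : ∑ k ∈ Finset.range (q + 1), k • vk k = q • h := by
      have hterm : ∀ k : ℕ, k • vk k = (k • ak k - (k + 1) • ak (k + 1)) + ak (k + 1) := by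
        intro k
        show k • (ak k - ak (k + 1)) = _
        rw [nsmul_sub, succ_nsmul]; abel
      rw [Finset.sum_congr rfl (fun k _ => hterm k), Finset.sum_add_distrib,
        Finset.sum_range_sub' (fun k => k • ak k) (q + 1), hsumv1, haq, zero_nsmul, smul_zero,
        sub_zero, zero_add]
    have hexp1 : q • (c * h) =
        ∑ j ∈ Finset.range (q + 1), ∑ k ∈ Finset.range (q + 1),
          ((k : ℤ)) • (vk j * vk k) := by
      calc q • (c * h) = c * (q • h) := (mul_smul_comm q c h).symm
        _ = (∑ j ∈ Finset.range (q + 1), vk j) * (∑ k ∈ Finset.range (q + 1), k • vk k) := by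
            rw [hsumv, hsumkv]
        _ = ∑ j ∈ Finset.range (q + 1), ∑ k ∈ Finset.range (q + 1), vk j * (k • vk k) :=
            Finset.sum_mul_sum _ _ _ _
        _ = _ := by
            refine Finset.sum_congr rfl fun j _ => Finset.sum_congr rfl fun k _ => ?_
            rw [mul_smul_comm, natCast_zsmul]
    have hexp2 : q • (h * c) =
        ∑ j ∈ Finset.range (q + 1), ∑ k ∈ Finset.range (q + 1),
          ((j : ℤ)) • (vk j * vk k) := by
      calc q • (h * c) = (q • h) * c := (smul_mul_assoc q h c).symm
        _ = (∑ j ∈ Finset.range (q + 1), j • vk j) * (∑ k ∈ Finset.range (q + 1), vk k) := by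
            rw [hsumv, hsumkv]
        _ = ∑ j ∈ Finset.range (q + 1), ∑ k ∈ Finset.range (q + 1), (j • vk j) * vk k :=
            Finset.sum_mul_sum _ _ _ _
        _ = _ := by
            refine Finset.sum_congr rfl fun j _ => Finset.sum_congr rfl fun k _ => ?_
            rw [smul_mul_assoc, natCast_zsmul]
    have hsumP : ∑ j ∈ Finset.range (q + 1), ∑ k ∈ Finset.range (q + 1), vk j * vk k
        = c * c := by
      rw [← Finset.sum_mul_sum, hsumv]
    constructor
    · have hD : q • (c * h - h * c) =
          ∑ j ∈ Finset.range (q + 1), ∑ k ∈ Finset.range (q + 1),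
            ((k : ℤ) - (j : ℤ)) • (vk j * vk k) := by
        rw [nsmul_sub, hexp1, hexp2, ← Finset.sum_sub_distrib]
        refine Finset.sum_congr rfl fun j _ => ?_
        rw [← Finset.sum_sub_distrib]
        refine Finset.sum_congr rfl fun k _ => ?_
        rw [sub_smul]
      rw [hD, ← hsumP]
      refine Finset.sum_le_sum ?_
      intro j _
      refine Finset.sum_le_sum ?_
      intro k _
      by_cases hcase : k ≤ j + 1
      · have hz : (0 : ℤ) ≤ 1 - ((k : ℤ) - (j : ℤ)) := by
          have : (k : ℤ) ≤ (j : ℤ) + 1 := by exact_mod_cast hcase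
          omega
        have hP : 0 ≤ vk j * vk k := hmulpos _ _ (hvnn j) (hvnn k)
        have e : ((k : ℤ) - (j : ℤ)) • (vk j * vk k)
            + (1 - ((k : ℤ) - (j : ℤ))) • (vk j * vk k) = vk j * vk k := by
          rw [← add_smul, add_sub_cancel, one_smul]
        calc ((k : ℤ) - (j : ℤ)) • (vk j * vk k)
            ≤ ((k : ℤ) - (j : ℤ)) • (vk j * vk k)
              + (1 - ((k : ℤ) - (j : ℤ))) • (vk j * vk k) :=
              le_add_of_nonneg_right (zsmul_nonneg hP hz)
          _ = vk j * vk k := e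
      · have h0' : vk j * vk k = 0 := hprod j k (Or.inl (by omega))
        rw [h0', smul_zero]
    · have hD : q • (h * c - c * h) =
          ∑ j ∈ Finset.range (q + 1), ∑ k ∈ Finset.range (q + 1),
            ((j : ℤ) - (k : ℤ)) • (vk j * vk k) := by
        rw [nsmul_sub, hexp1, hexp2, ← Finset.sum_sub_distrib]
        refine Finset.sum_congr rfl fun j _ => ?_
        rw [← Finset.sum_sub_distrib]
        refine Finset.sum_congr rfl fun k _ => ?_
        rw [sub_smul]
      rw [hD, ← hsumP]
      refine Finset.sum_le_sum ?_
      intro j _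
      refine Finset.sum_le_sum ?_
      intro k _
      by_cases hcase : j ≤ k + 1
      · have hz : (0 : ℤ) ≤ 1 - ((j : ℤ) - (k : ℤ)) := by
          have : (j : ℤ) ≤ (k : ℤ) + 1 := by exact_mod_cast hcase
          omega
        have hP : 0 ≤ vk j * vk k := hmulpos _ _ (hvnn j) (hvnn k)
        have e : ((j : ℤ) - (k : ℤ)) • (vk j * vk k)
            + (1 - ((j : ℤ) - (k : ℤ))) • (vk j * vk k) = vk j * vk k := by
          rw [← add_smul, add_sub_cancel, one_smul]
        calc ((j : ℤ) - (k : ℤ)) • (vk j * vk k)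
            ≤ ((j : ℤ) - (k : ℤ)) • (vk j * vk k)
              + (1 - ((j : ℤ) - (k : ℤ))) • (vk j * vk k) :=
              le_add_of_nonneg_right (zsmul_nonneg hP hz)
          _ = vk j * vk k := e
      · have h0' : vk j * vk k = 0 := hprod j k (Or.inr (by omega))
        rw [h0', smul_zero]
  have h1 : (c * h - h * c)⁺ = 0 := by
    apply harch _ (c * c) (posPart_nonneg _)
    intro n
    rw [stmt4_nsmul_posPart, posPart_def]
    exact sup_le (key n).1 hcc
  have h2 : (h * c - c * h)⁺ = 0 := by
    apply harch _ (c * c) (posPart_nonneg _)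
    intro n
    rw [stmt4_nsmul_posPart, posPart_def]
    exact sup_le (key n).2 hcc
  have hle1 : c * h - h * c ≤ 0 := by
    calc c * h - h * c ≤ (c * h - h * c)⁺ := le_posPart _
      _ = 0 := h1
  have hle2 : h * c - c * h ≤ 0 := by
    calc h * c - c * h ≤ (h * c - c * h)⁺ := le_posPart _
      _ = 0 := h2
  exact le_antisymm (sub_nonpos.mp hle1) (sub_nonpos.mp hle2)

end Stmt4Aux

/-- Every Archimedean f-algebra is commutative. -/
theorem stmt_4 {E : Type*} [Ring E] [Lattice E]
    [CovariantClass E E (· + ·) (· ≤ ·)] [Module ℝ E]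
    -- `E` is a lattice-ordered algebra: the positive cone is closed under multiplication
    (hmulpos : ∀ x y : E, 0 ≤ x → 0 ≤ y → 0 ≤ x * y)
    -- the f-algebra property
    (hf : ∀ x y z : E, x ⊓ y = 0 → 0 ≤ z → (x * z) ⊓ y = 0 ∧ (z * x) ⊓ y = 0)
    -- `E` is Archimedean
    (harch : ∀ x y : E, 0 ≤ x → (∀ n : ℕ, n • x ≤ y) → x = 0) :
    ∀ x y : E, x * y = y * x := by
  have hcpos : ∀ a b : E, 0 ≤ a → 0 ≤ b → a * b = b * a := by
    intro a b ha hb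
    have h1 : (a + b) * a = a * (a + b) :=
      stmt4_core hmulpos hf harch ha (le_add_of_nonneg_right hb)
    rw [add_mul, mul_add] at h1
    exact (add_left_cancel h1).symm
  intro x y
  have e1 := hcpos x⁺ y⁺ (posPart_nonneg x) (posPart_nonneg y)
  have e2 := hcpos x⁺ y⁻ (posPart_nonneg x) (negPart_nonneg y)
  have e3 := hcpos x⁻ y⁺ (negPart_nonneg x) (posPart_nonneg y)
  have e4 := hcpos x⁻ y⁻ (negPart_nonneg x) (negPart_nonneg y)
  calc x * y = (x⁺ - x⁻) * (y⁺ - y⁻) := by rw [posPart_sub_negPart, posPart_sub_negPart]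
    _ = x⁺ * y⁺ - x⁺ * y⁻ - x⁻ * y⁺ + x⁻ * y⁻ := by
        rw [sub_mul, mul_sub, mul_sub]; abel
    _ = y⁺ * x⁺ - y⁻ * x⁺ - y⁺ * x⁻ + y⁻ * x⁻ := by rw [e1, e2, e3, e4]
    _ = (y⁺ - y⁻) * (x⁺ - x⁻) := by
        rw [sub_mul, mul_sub, mul_sub]; abel
    _ = y * x := by rw [posPart_sub_negPart, posPart_sub_negPart]
end

section
/- Let G be an Archimedean f-algebra with multiplicative unit e, and let q : G → G be a band projection (order projection). Then there exists a positive element t ∈ G₊ with t = t² and q(x) = x·t for all x ∈ G. Consequently, for every v ∈ G, taking q the band projection onto the band generated by v⁺, one has v⁺ = v·t, v⁻·t = 0, and v⁻ = v·(t − e). -/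
/-- Let `G` be an Archimedean f-algebra with multiplicative unit `e`, and `q : G → G` a
band projection (a linear idempotent with `0 ≤ q x ≤ x` for `x ≥ 0`).  Then there is a
positive idempotent `t ∈ G₊` with `q x = x * t` for all `x`.  Consequently, for every
`v ∈ G`, taking `q` the band projection onto the band generated by `v⁺` (formalized as the
double disjoint complement of `v⁺`), one has `v⁺ = v * t`, `v⁻ * t = 0` and
`v⁻ = v * (t - e)`. -/
theorem stmt_10 {G : Type*} [Ring G] [Lattice G]
    [CovariantClass G G (· + ·) (· ≤ ·)] [Module ℝ G]
    -- `G` is a lattice-ordered algebra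
    (hmulpos : ∀ x y : G, 0 ≤ x → 0 ≤ y → 0 ≤ x * y)
    -- the f-algebra property
    (hf : ∀ x y z : G, x ⊓ y = 0 → 0 ≤ z → (x * z) ⊓ y = 0 ∧ (z * x) ⊓ y = 0)
    -- `G` is Archimedean
    (harch : ∀ x y : G, 0 ≤ x → (∀ n : ℕ, n • x ≤ y) → x = 0)
    -- `e` is a positive multiplicative unit of `G`
    (e : G) (he : 0 ≤ e) (heu : ∀ x : G, e * x = x ∧ x * e = x) :
    -- every band projection is multiplication by a positive idempotent
    (∀ q : G → G,
      (∀ x y : G, q (x + y) = q x + q y) →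
      (∀ (c : ℝ) (x : G), q (c • x) = c • q x) →
      (∀ x : G, q (q x) = q x) →
      (∀ x : G, 0 ≤ x → 0 ≤ q x ∧ q x ≤ x) →
      ∃ t : G, 0 ≤ t ∧ t * t = t ∧ ∀ x : G, q x = x * t) ∧
    -- consequence for the band projection onto the band generated by `v⁺ = v ⊔ 0`
    (∀ v : G, ∀ q : G → G,
      (∀ x y : G, q (x + y) = q x + q y) →
      (∀ (c : ℝ) (x : G), q (c • x) = c • q x) →
      (∀ x : G, q (q x) = q x) →
      (∀ x : G, 0 ≤ x → 0 ≤ q x ∧ q x ≤ x) →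
      -- `q` maps into the band generated by `v⁺` and fixes it
      (∀ x : G, ∀ y : G, |y| ⊓ (v ⊔ 0) = 0 → |q x| ⊓ |y| = 0) →
      (∀ x : G, (∀ y : G, |y| ⊓ (v ⊔ 0) = 0 → |x| ⊓ |y| = 0) → q x = x) →
      ∃ t : G, 0 ≤ t ∧ t * t = t ∧ (∀ x : G, q x = x * t) ∧
        v ⊔ 0 = v * t ∧ ((-v) ⊔ 0) * t = 0 ∧ (-v) ⊔ 0 = v * (t - e)) := by
  -- disjoint positive elements multiply to zero
  have mul0 : ∀ a b : G, 0 ≤ a → 0 ≤ b → a ⊓ b = 0 → a * b = 0 := by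
    intro a b ha hb hab
    have h1 : (a * b) ⊓ b = 0 := (hf a b b hab hb).1
    have h1' : b ⊓ (a * b) = 0 := by rwa [inf_comm] at h1
    have h2 : (a * b) ⊓ (a * b) = 0 := (hf b (a * b) a h1' ha).2
    simpa [inf_idem] using h2
  -- the main part: every band projection is multiplication by a positive idempotent
  have main : ∀ q : G → G,
      (∀ x y : G, q (x + y) = q x + q y) →
      (∀ (c : ℝ) (x : G), q (c • x) = c • q x) →
      (∀ x : G, q (q x) = q x) →
      (∀ x : G, 0 ≤ x → 0 ≤ q x ∧ q x ≤ x) →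
      ∃ t : G, 0 ≤ t ∧ t * t = t ∧ ∀ x : G, q x = x * t := by
    intro q hadd hsmul hidem hpos
    have hneg : ∀ x : G, q (-x) = - q x := by
      intro x
      rw [← neg_one_smul ℝ x, hsmul, neg_one_smul]
    have hsub : ∀ a b : G, q (a - b) = q a - q b := by
      intro a b
      rw [sub_eq_add_neg, hadd, hneg, sub_eq_add_neg]
    have hmono : ∀ a b : G, a ≤ b → q a ≤ q b := by
      intro a b h
      have h0 : 0 ≤ q (b - a) := (hpos _ (sub_nonneg.2 h)).1
      rw [hsub] at h0
      exact sub_nonneg.1 h0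
    -- band projection disjointness: q x ⊓ (x - q x) = 0 for 0 ≤ x
    have hdisj : ∀ x : G, 0 ≤ x → q x ⊓ (x - q x) = 0 := by
      intro x hx
      set y := q x ⊓ (x - q x) with hy
      have hy1 : y ≤ q x := inf_le_left
      have hy2 : y ≤ x - q x := inf_le_right
      have hy0 : 0 ≤ y := le_inf (hpos x hx).1 (sub_nonneg.2 (hpos x hx).2)
      have h3 : q y ≤ 0 := by
        have := hmono _ _ hy2
        rw [hsub, hidem, sub_self] at this
        exact this
      have h4 : y ≤ q y := by
        have h5 : q (q x - y) ≤ q x - y :=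
          (hpos _ (sub_nonneg.2 hy1)).2
        rw [hsub, hidem] at h5
        exact (sub_le_sub_iff_left (q x)).1 h5
      exact le_antisymm (h4.trans h3) hy0
    set t := q e with htdef
    have hqt : q t = t := hidem e
    have ht0 : 0 ≤ t := (hpos e he).1
    have hte : t ≤ e := (hpos e he).2
    set s := e - t with hsdef
    have hs0 : 0 ≤ s := sub_nonneg.2 hte
    have hts : t ⊓ s = 0 := hdisj e he
    have hqs : q s = 0 := by rw [hsdef, hsub, ← htdef, hqt, sub_self]
    have hts0 : t * s = 0 := mul0 t s ht0 hs0 hts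
    have htt : t * t = t := by
      have : t * t = t * e - t * s := by rw [hsdef, mul_sub]; abel
      rw [this, (heu t).2, hts0, sub_zero]
    refine ⟨t, ht0, htt, ?_⟩
    -- first for nonnegative x
    have hpos_case : ∀ x : G, 0 ≤ x → q x = x * t := by
      intro x hx
      set u := q x with hu
      set w := x - u with hw
      have hu0 : 0 ≤ u := (hpos x hx).1
      have hw0 : 0 ≤ w := sub_nonneg.2 (hpos x hx).2
      have hqu : q u = u := hidem x
      have hqw : q w = 0 := by rw [hw, hsub, ← hu, hqu, sub_self]
      -- w is disjoint from t
      have hwt : w ⊓ t = 0 := by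
        set d := w ⊓ t with hd
        have hd0 : 0 ≤ d := le_inf hw0 ht0
        have h1 : q d ≤ 0 := by
          have := hmono _ _ (inf_le_left : d ≤ w)
          rwa [hqw] at this
        have h2 : d ≤ q d := by
          have h5 : q (t - d) ≤ t - d :=
            (hpos _ (sub_nonneg.2 (inf_le_right : d ≤ t))).2
          rw [hsub, hqt] at h5
          exact (sub_le_sub_iff_left t).1 h5
        exact le_antisymm (h2.trans h1) hd0
      -- u is disjoint from s
      have hus : u ⊓ s = 0 := by
        set d := u ⊓ s with hd
        have hd0 : 0 ≤ d := le_inf hu0 hs0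
        have h1 : q d ≤ 0 := by
          have := hmono _ _ (inf_le_right : d ≤ s)
          rwa [hqs] at this
        have h2 : d ≤ q d := by
          have h5 : q (u - d) ≤ u - d :=
            (hpos _ (sub_nonneg.2 (inf_le_left : d ≤ u))).2
          rw [hsub, hqu] at h5
          exact (sub_le_sub_iff_left u).1 h5
        exact le_antisymm (h2.trans h1) hd0
      have hwt0 : w * t = 0 := mul0 w t hw0 ht0 hwt
      have hus0 : u * s = 0 := mul0 u s hu0 hs0 hus
      have hut : u * t = u := by
        have : u * t = u * e - u * s := by rw [hsdef, mul_sub]; abel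
        rw [this, (heu u).2, hus0, sub_zero]
      have hxuw : x = u + w := by rw [hw]; abel
      calc q x = u := rfl
        _ = u * t + w * t := by rw [hut, hwt0, add_zero]
        _ = (u + w) * t := by rw [add_mul]
        _ = x * t := by rw [← hxuw]
    intro x
    have hx : x = (x ⊔ 0) - ((-x) ⊔ 0) := by
      have := posPart_sub_negPart x
      rw [posPart_def, negPart_def] at this
      exact this.symm
    calc q x = q ((x ⊔ 0) - ((-x) ⊔ 0)) := by rw [← hx]
      _ = q (x ⊔ 0) - q ((-x) ⊔ 0) := hsub _ _
      _ = (x ⊔ 0) * t - ((-x) ⊔ 0) * t := by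
          rw [hpos_case _ le_sup_right, hpos_case _ le_sup_right]
      _ = ((x ⊔ 0) - ((-x) ⊔ 0)) * t := by rw [sub_mul]
      _ = x * t := by rw [← hx]
  constructor
  · exact main
  · intro v q hadd hsmul hidem hpos hband hfix
    obtain ⟨t, ht0, htt, hqt⟩ := main q hadd hsmul hidem hpos
    have hneg : ∀ x : G, q (-x) = - q x := by
      intro x
      rw [← neg_one_smul ℝ x, hsmul, neg_one_smul]
    have hsub : ∀ a b : G, q (a - b) = q a - q b := by
      intro a b
      rw [sub_eq_add_neg, hadd, hneg, sub_eq_add_neg]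
    have hvp0 : (0:G) ≤ v ⊔ 0 := le_sup_right
    have hvn0 : (0:G) ≤ (-v) ⊔ 0 := le_sup_right
    have hpn : (v ⊔ 0) ⊓ ((-v) ⊔ 0) = 0 := by
      have := posPart_inf_negPart_eq_zero v
      rwa [posPart_def, negPart_def] at this
    -- q fixes v⁺
    have hqvp : q (v ⊔ 0) = v ⊔ 0 := by
      apply hfix
      intro y hy
      rw [abs_of_nonneg hvp0, inf_comm]
      exact hy
    -- q kills v⁻
    have hqvn : q ((-v) ⊔ 0) = 0 := by
      have h1 : |(-v) ⊔ 0| ⊓ (v ⊔ 0) = 0 := by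
        rw [abs_of_nonneg hvn0, inf_comm]
        exact hpn
      have h2 : |q ((-v) ⊔ 0)| ⊓ |(-v) ⊔ 0| = 0 := hband _ _ h1
      rw [abs_of_nonneg hvn0] at h2
      have h3 : 0 ≤ q ((-v) ⊔ 0) := (hpos _ hvn0).1
      have h4 : q ((-v) ⊔ 0) ≤ |q ((-v) ⊔ 0)| ⊓ ((-v) ⊔ 0) :=
        le_inf (le_abs_self _) (hpos _ hvn0).2
      rw [h2] at h4
      exact le_antisymm h4 h3
    have hx : v = (v ⊔ 0) - ((-v) ⊔ 0) := by
      have := posPart_sub_negPart v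
      rw [posPart_def, negPart_def] at this
      exact this.symm
    have hqv : q v = v ⊔ 0 := by
      calc q v = q ((v ⊔ 0) - ((-v) ⊔ 0)) := by rw [← hx]
        _ = q (v ⊔ 0) - q ((-v) ⊔ 0) := hsub _ _
        _ = v ⊔ 0 := by rw [hqvp, hqvn, sub_zero]
    have h1 : v ⊔ 0 = v * t := by rw [← hqv, hqt]
    have hvpt : (v ⊔ 0) * t = v ⊔ 0 := by rw [← hqt, hqvp]
    have key : ∀ a b c : G, a = b - c → c = b - a := by
      intro a b c h; rw [h]; abel
    have hvn_eq : (-v) ⊔ 0 = (v ⊔ 0) - v := key v (v ⊔ 0) ((-v) ⊔ 0) hx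
    have h2 : ((-v) ⊔ 0) * t = 0 := by
      rw [hvn_eq, sub_mul, hvpt, ← h1, sub_self]
    have h3 : (-v) ⊔ 0 = v * (t - e) := by
      rw [mul_sub, (heu v).2, ← h1, hvn_eq]
    exact ⟨t, ht0, htt, hqt, h1, h2, h3⟩
end
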